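/- arXiv:2106.03591 — 2 statements merged into one kernel-verified Lean document; each statement's English description precedes it below -/
import Mathlib

section
/- Let K_ν be continuous with support [-τ, τ], satisfying ∫ K_ν(x)x^j dx = 0 for j = 0,…,ν-1 and j = ν+1,…,k-1, ∫ K_ν(x)x^ν dx = (-1)^ν ν!, and ∫ K_ν(x)x^k dx = β. If x : ℝ → ℝ is k times continuously differentiable with |x^{(k)}| ≤ M everywhere, then for all t and h > 0, |(1/h^{ν+1}) ∫ K_ν((t-u)/h) x(u) du − x^{(ν)}(t)| ≤ h^{k-ν} (M/k!) ∫_{-τ}^{τ} |K_ν(v)| |v|^k dv. -/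
open MeasureTheory

private lemma aux_idw {f : ℝ → ℝ} {n m : ℕ} (hf : ContDiff ℝ n f) (hmn : m ≤ n)
    {s : Set ℝ} (hs : UniqueDiffOn ℝ s) {y : ℝ} (hy : y ∈ s) :
    iteratedDerivWithin m f s y = iteratedDeriv m f y := by
  have h1 : HasFTaylorSeriesUpToOn (n : ℕ∞) f (ftaylorSeries ℝ f) s :=
    (contDiff_iff_ftaylorSeries.mp hf).hasFTaylorSeriesUpToOn s
  have h2 := h1.eq_iteratedFDerivWithin_of_uniqueDiffOn (by exact_mod_cast hmn) hs hy
  rw [iteratedDerivWithin_eq_iteratedFDerivWithin, iteratedDeriv_eq_iteratedFDeriv, ← h2]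
  rfl

private lemma taylor_lt {f : ℝ → ℝ} {n : ℕ} (hf : ContDiff ℝ (n + 1) f) {M : ℝ}
    (hM : ∀ u, |iteratedDeriv (n + 1) f u| ≤ M) {a y : ℝ} (hay : a < y) :
    |f y - ∑ j ∈ Finset.range (n + 1),
        iteratedDeriv j f a * (y - a) ^ j / (Nat.factorial j)|
      ≤ M * |y - a| ^ (n + 1) / (Nat.factorial (n + 1)) := by
  have hf1 : ContDiff ℝ ((n + 1 : ℕ) : ℕ∞) f := by exact_mod_cast hf
  have hud : UniqueDiffOn ℝ (Set.Icc a y) := uniqueDiffOn_Icc hay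
  have hfo : ContDiffOn ℝ n f (Set.Icc a y) :=
    (hf.of_le (by exact_mod_cast Nat.le_succ n)).contDiffOn
  have hf' : DifferentiableOn ℝ (iteratedDerivWithin n f (Set.Icc a y)) (Set.Ioo a y) :=
    ((hf.contDiffOn).differentiableOn_iteratedDerivWithin
      (by exact_mod_cast n.lt_succ_self) hud).mono Set.Ioo_subset_Icc_self
  obtain ⟨c, hc, hcr⟩ := taylor_mean_remainder_lagrange hay.ne
    (by rwa [Set.uIcc_of_le hay.le]) (by rwa [Set.uIcc_of_le hay.le, Set.uIoo_of_le hay.le])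
  rw [Set.uIcc_of_le hay.le] at hcr
  rw [Set.uIoo_of_le hay.le] at hc
  rw [taylor_within_apply] at hcr
  have ha : a ∈ Set.Icc a y := Set.left_mem_Icc.2 hay.le
  have esum : ∀ j ∈ Finset.range (n + 1),
      ((j.factorial : ℝ)⁻¹ * (y - a) ^ j) • iteratedDerivWithin j f (Set.Icc a y) a
        = iteratedDeriv j f a * (y - a) ^ j / (Nat.factorial j) := by
    intro j hj
    rw [aux_idw hf1 (by have := Finset.mem_range.1 hj; omega : j ≤ n + 1) hud ha, smul_eq_mul]
    ring
  rw [Finset.sum_congr rfl esum] at hcr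
  rw [aux_idw hf1 le_rfl hud (Set.Ioo_subset_Icc_self hc)] at hcr
  rw [hcr]
  have h1 : |iteratedDeriv (n + 1) f c * (y - a) ^ (n + 1) / (Nat.factorial (n + 1) : ℝ)|
      = |iteratedDeriv (n + 1) f c| * |y - a| ^ (n + 1) / (Nat.factorial (n + 1) : ℝ) := by
    rw [abs_div, abs_mul, abs_pow, Nat.abs_cast]
  rw [h1]
  gcongr
  exact hM c

private lemma sub_aux (F : ℝ → ℝ) (t h : ℝ) (hh : 0 < h) :
    (∫ u : ℝ, F ((t - u) / h)) = h * ∫ v : ℝ, F v := by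
  calc (∫ u : ℝ, F ((t - u) / h))
      = ∫ u : ℝ, (fun w => F (w / h)) (t - u) := by simp
    _ = ∫ w : ℝ, F (w / h) := integral_sub_left_eq_self (fun w => F (w / h)) volume t
    _ = |h| • ∫ v : ℝ, F v := Measure.integral_comp_div F h
    _ = h * ∫ v : ℝ, F v := by rw [abs_of_pos hh, smul_eq_mul]

private lemma taylor_global {f : ℝ → ℝ} {k : ℕ} (hk : 1 ≤ k) (hf : ContDiff ℝ k f) {M : ℝ}
    (hM : ∀ u, |iteratedDeriv k f u| ≤ M) (a y : ℝ) :
    |f y - ∑ j ∈ Finset.range k, iteratedDeriv j f a * (y - a) ^ j / (Nat.factorial j)|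
      ≤ M * |y - a| ^ k / (Nat.factorial k) := by
  obtain ⟨n, rfl⟩ : ∃ n, k = n + 1 := ⟨k - 1, (Nat.succ_pred_eq_of_pos hk).symm⟩
  rcases lt_trichotomy a y with h | h | h
  · exact taylor_lt hf hM h
  · subst h
    have hs : ∑ j ∈ Finset.range (n + 1),
        iteratedDeriv j f a * (a - a) ^ j / (Nat.factorial j) = f a := by
      rw [Finset.sum_eq_single_of_mem 0 (Finset.mem_range.2 (by omega))]
      · simp
      · intro b _ hb
        simp [sub_self, zero_pow hb]
    rw [hs, sub_self, abs_zero, sub_self, abs_zero]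
    rw [zero_pow (by omega : n + 1 ≠ 0)]
    simp
  · -- reflection
    have hg : ContDiff ℝ (n + 1) (fun s : ℝ => f (-s)) := hf.comp contDiff_neg
    have hgM : ∀ u, |iteratedDeriv (n + 1) (fun s : ℝ => f (-s)) u| ≤ M := by
      intro u
      rw [iteratedDeriv_comp_neg, smul_eq_mul]
      calc |(-1 : ℝ) ^ (n + 1) * iteratedDeriv (n + 1) f (-u)|
          = |iteratedDeriv (n + 1) f (-u)| := by
            rw [abs_mul, abs_pow, abs_neg, abs_one, one_pow, one_mul]
        _ ≤ M := hM (-u)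
    have key := taylor_lt hg hgM (show -a < -y by linarith)
    have e2 : ∀ j ∈ Finset.range (n + 1),
        iteratedDeriv j (fun s : ℝ => f (-s)) (-a) * (-y - -a) ^ j / (Nat.factorial j)
          = iteratedDeriv j f a * (y - a) ^ j / (Nat.factorial j) := by
      intro j _
      rw [iteratedDeriv_comp_neg, neg_neg, smul_eq_mul,
        show (-y - -a : ℝ) = (-1) * (y - a) by ring, mul_pow]
      have h1 : ((-1 : ℝ)) ^ j * (-1 : ℝ) ^ j = 1 := by
        rw [← pow_add, ← two_mul, pow_mul]; norm_num
      calc (-1 : ℝ) ^ j * iteratedDeriv j f a * ((-1 : ℝ) ^ j * (y - a) ^ j) / (Nat.factorial j)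
          = ((-1 : ℝ) ^ j * (-1 : ℝ) ^ j) *
              (iteratedDeriv j f a * (y - a) ^ j / (Nat.factorial j)) := by ring
        _ = iteratedDeriv j f a * (y - a) ^ j / (Nat.factorial j) := by rw [h1, one_mul]
    rw [Finset.sum_congr rfl e2] at key
    rw [show (-y - -a : ℝ) = -(y - a) by ring, abs_neg] at key
    simpa using key

theorem kernel_derivative_estimator_bias (ν k : ℕ) (hν : 1 ≤ ν) (hk : ν + 2 ≤ k)
    (τ : ℝ) (hτ : 0 < τ) (Kν : ℝ → ℝ) (hKcont : Continuous Kν)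
    (hKsupp : ∀ v : ℝ, v ∉ Set.Icc (-τ) τ → Kν v = 0)
    (hmom0 : ∀ j : ℕ, j < k → j ≠ ν → (∫ v : ℝ, Kν v * v ^ j) = 0)
    (hmomν : (∫ v : ℝ, Kν v * v ^ ν) = (-1 : ℝ) ^ ν * (Nat.factorial ν))
    (x : ℝ → ℝ) (M : ℝ) (hx : ContDiff ℝ k x)
    (hxk : ∀ u : ℝ, |iteratedDeriv k x u| ≤ M) :
    ∀ (t h : ℝ), 0 < h →
      |(1 / h ^ (ν + 1)) * (∫ u : ℝ, Kν ((t - u) / h) * x u) - iteratedDeriv ν x t|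
        ≤ h ^ (k - ν) * (M / Nat.factorial k) * ∫ v in Set.Icc (-τ) τ, |Kν v| * |v| ^ k := by
  intro t h hh
  have hh0 : h ≠ 0 := ne_of_gt hh
  have hνk : ν < k := by omega
  have hk1 : 1 ≤ k := by omega
  have hxc : Continuous x := hx.continuous
  -- Integrability of kernel products
  have intKg : ∀ g : ℝ → ℝ, Continuous g → Integrable (fun v => Kν v * g v) := by
    intro g hg
    apply (hKcont.mul hg).integrable_of_hasCompactSupport
    apply HasCompactSupport.intro isCompact_Icc
    intro v hv
    rw [Pi.mul_apply, hKsupp v hv, zero_mul]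
  -- Substitution
  have sub1 : (∫ u : ℝ, Kν ((t - u) / h) * x u) = h * ∫ v : ℝ, Kν v * x (t - h * v) := by
    have e : (fun u : ℝ => Kν ((t - u) / h) * x u)
        = fun u : ℝ => (fun v : ℝ => Kν v * x (t - h * v)) ((t - u) / h) := by
      funext u
      have hu : t - h * ((t - u) / h) = u := by field_simp; ring
      simp only [hu]
    calc (∫ u : ℝ, Kν ((t - u) / h) * x u)
        = ∫ u : ℝ, (fun v : ℝ => Kν v * x (t - h * v)) ((t - u) / h) := by rw [e]
      _ = h * ∫ v : ℝ, Kν v * x (t - h * v) := sub_aux (fun v : ℝ => Kν v * x (t - h * v)) t h hh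
  -- Taylor polynomial coefficients
  set c : ℕ → ℝ := fun j => iteratedDeriv j x t * (-h) ^ j / (Nat.factorial j) with hc
  set P : ℝ → ℝ := fun v => ∑ j ∈ Finset.range k, c j * v ^ j with hP
  have hPc : Continuous P := by
    apply continuous_finset_sum
    intro j _
    exact continuous_const.mul (continuous_pow j)
  -- Remainder bound
  have hR : ∀ v : ℝ, |x (t - h * v) - P v| ≤ M * h ^ k * |v| ^ k / (Nat.factorial k) := by
    intro v
    have key := taylor_global hk1 hx hxk t (t - h * v)
    have e : ∀ j ∈ Finset.range k,
        iteratedDeriv j x t * (t - h * v - t) ^ j / (Nat.factorial j) = c j * v ^ j := by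
      intro j _
      rw [hc, show (t - h * v - t : ℝ) = (-h) * v by ring, mul_pow]
      ring
    rw [Finset.sum_congr rfl e] at key
    have e2 : |t - h * v - t| = h * |v| := by
      rw [show (t - h * v - t : ℝ) = -(h * v) by ring, abs_neg, abs_mul, abs_of_pos hh]
    rw [e2, mul_pow] at key
    calc |x (t - h * v) - P v| ≤ M * (h ^ k * |v| ^ k) / (Nat.factorial k) := key
      _ = M * h ^ k * |v| ^ k / (Nat.factorial k) := by ring
  -- Integrability pieces
  have intF : Integrable (fun v : ℝ => Kν v * x (t - h * v)) :=
    intKg _ (hxc.comp (continuous_const.sub (continuous_const.mul continuous_id)))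
  have intKP : Integrable (fun v : ℝ => Kν v * P v) := intKg _ hPc
  have intKR : Integrable (fun v : ℝ => Kν v * (x (t - h * v) - P v)) := by
    have := intF.sub intKP
    simpa [mul_sub, Pi.sub_def] using this
  -- Splitting of the integral
  have split : (∫ v : ℝ, Kν v * x (t - h * v))
      = (∫ v : ℝ, Kν v * (x (t - h * v) - P v)) + ∫ v : ℝ, Kν v * P v := by
    rw [← integral_add intKR intKP]
    congr 1
    funext v
    ring
  -- Moment computation
  have hfacν : (Nat.factorial ν : ℝ) ≠ 0 := Nat.cast_ne_zero.2 (Nat.factorial_ne_zero ν)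
  have momento : (∫ v : ℝ, Kν v * P v) = h ^ ν * iteratedDeriv ν x t := by
    have e : (fun v : ℝ => Kν v * P v)
        = fun v : ℝ => ∑ j ∈ Finset.range k, c j * (Kν v * v ^ j) := by
      funext v
      rw [hP]
      simp only
      rw [Finset.mul_sum]
      apply Finset.sum_congr rfl
      intro j _
      ring
    rw [e, integral_finset_sum _ (fun j _ =>
      (intKg (fun v => v ^ j) (continuous_pow j)).const_mul (c j))]
    have e2 : ∀ j ∈ Finset.range k, (∫ v : ℝ, c j * (Kν v * v ^ j))
        = c j * ∫ v : ℝ, Kν v * v ^ j := fun j _ => integral_const_mul _ _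
    rw [Finset.sum_congr rfl e2]
    rw [Finset.sum_eq_single_of_mem ν (Finset.mem_range.2 hνk)]
    · rw [hmomν, hc]
      have hσ : (-h : ℝ) ^ ν * (-1 : ℝ) ^ ν = h ^ ν := by
        rw [← mul_pow]; norm_num
      calc iteratedDeriv ν x t * (-h) ^ ν / (Nat.factorial ν) *
            ((-1 : ℝ) ^ ν * (Nat.factorial ν))
          = iteratedDeriv ν x t * ((-h) ^ ν * (-1 : ℝ) ^ ν) *
              ((Nat.factorial ν : ℝ) / (Nat.factorial ν)) := by ring
        _ = h ^ ν * iteratedDeriv ν x t := by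
            rw [div_self hfacν, hσ]; ring
    · intro j hj hjν
      rw [hmom0 j (Finset.mem_range.1 hj) hjν, mul_zero]
  -- Bounding the remainder integral
  set I := ∫ v in Set.Icc (-τ) τ, |Kν v| * |v| ^ k with hI
  have hIR : |∫ v : ℝ, Kν v * (x (t - h * v) - P v)| ≤ M * h ^ k / (Nat.factorial k) * I := by
    set R : ℝ → ℝ := fun v => Kν v * (x (t - h * v) - P v) with hRdef
    have hRzero : ∀ v : ℝ, v ∉ Set.Icc (-τ) τ → R v = 0 := by
      intro v hv
      rw [hRdef]
      simp only
      rw [hKsupp v hv, zero_mul]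
    rw [← setIntegral_eq_integral_of_forall_compl_eq_zero hRzero]
    have step1 : |∫ v in Set.Icc (-τ) τ, R v| ≤ ∫ v in Set.Icc (-τ) τ, |R v| := by
      have := norm_integral_le_integral_norm (μ := volume.restrict (Set.Icc (-τ) τ)) R
      simpa [Real.norm_eq_abs] using this
    have step2 : (∫ v in Set.Icc (-τ) τ, |R v|)
        ≤ ∫ v in Set.Icc (-τ) τ, (M * h ^ k / (Nat.factorial k)) * (|Kν v| * |v| ^ k) := by
      apply setIntegral_mono_on
      · exact intKR.abs.integrableOn
      · exact ((continuous_const.mul (hKcont.abs.mul (continuous_abs.pow k))).integrableOn_Icc)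
      · exact measurableSet_Icc
      · intro v _
        rw [hRdef]
        simp only
        rw [abs_mul]
        calc |Kν v| * |x (t - h * v) - P v|
            ≤ |Kν v| * (M * h ^ k * |v| ^ k / (Nat.factorial k)) :=
              mul_le_mul_of_nonneg_left (hR v) (abs_nonneg _)
          _ = (M * h ^ k / (Nat.factorial k)) * (|Kν v| * |v| ^ k) := by ring
    have step3 : (∫ v in Set.Icc (-τ) τ, (M * h ^ k / (Nat.factorial k)) * (|Kν v| * |v| ^ k))
        = M * h ^ k / (Nat.factorial k) * I := by
      rw [hI, integral_const_mul]
    exact le_trans (le_trans step1 step2) (le_of_eq step3)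
  -- Combine
  have hkey : (1 / h ^ (ν + 1)) * (∫ u : ℝ, Kν ((t - u) / h) * x u) - iteratedDeriv ν x t
      = (∫ v : ℝ, Kν v * (x (t - h * v) - P v)) / h ^ ν := by
    rw [sub1, split, momento]
    have hpν : (h : ℝ) ^ ν ≠ 0 := pow_ne_zero _ hh0
    field_simp
    ring
  rw [hkey, abs_div, abs_of_pos (pow_pos hh ν)]
  rw [div_le_iff₀ (pow_pos hh ν)]
  have hpow : h ^ (k - ν) * h ^ ν = h ^ k := by
    rw [← pow_add]
    congr 1
    omega
  have hEq : h ^ (k - ν) * (M / Nat.factorial k) * I * h ^ ν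
      = M * h ^ k / (Nat.factorial k) * I := by
    rw [← hpow]; ring
  rw [hEq]
  exact hIR
end

section
/- Let K : ℝ → ℝ be continuous with support in [-τ, τ], ∫K = 1, and |K| ≤ B. For the Riemann-sum kernel smoother x̂(t) = (1/h)∑_{i=1}^n (∫_{s_{i-1}}^{s_i} K((t−u)/h)du)·x(t_i) with 0 = s₀ ≤ … ≤ s_n = 1, t_i ∈ [s_{i-1}, s_i], max_i (s_i − s_{i-1}) ≤ δ, and x : [0,1] → ℝ M-Lipschitz, one has |x̂(t) − (1/h)∫₀¹K((t−u)/h)x(u)du| ≤ 2τ B M δ / h·h = 2τBMδ for every t with [t−τh, t+τh] ⊆ [0,1]. Hence the Riemann-sum estimator differs from the continuous convolution by at most 2τBMδ. -/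
open MeasureTheory Finset

theorem riemann_sum_kernel_error (τ B M h δ : ℝ)
    (hτ : 0 < τ) (hB : 0 < B) (hM : 0 < M) (hh : 0 < h) (hδ : 0 < δ)
    (K : ℝ → ℝ) (hKcont : Continuous K)
    (hKsupp : ∀ v : ℝ, v ∉ Set.Icc (-τ) τ → K v = 0)
    (hKbdd : ∀ v : ℝ, |K v| ≤ B)
    (x : ℝ → ℝ) (hx : ∀ u w : ℝ, |x u - x w| ≤ M * |u - w|)
    (n : ℕ) (hn : 1 ≤ n) (s : ℕ → ℝ) (ti : ℕ → ℝ)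
    (hs0 : s 0 = 0) (hsn : s n = 1)
    (hmono : ∀ i : ℕ, i < n → s i ≤ s (i + 1))
    (hmesh : ∀ i : ℕ, 1 ≤ i → i ≤ n → s i - s (i - 1) ≤ δ)
    (hti : ∀ i : ℕ, 1 ≤ i → i ≤ n → ti i ∈ Set.Icc (s (i - 1)) (s i))
    (t : ℝ) (ht : Set.Icc (t - τ * h) (t + τ * h) ⊆ Set.Icc (0:ℝ) 1) :
    |(1 / h) * ∑ i ∈ Finset.Icc 1 n, (∫ u in (s (i - 1))..(s i), K ((t - u) / h)) * x (ti i)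
        - (1 / h) * ∫ u in (0:ℝ)..1, K ((t - u) / h) * x u|
      ≤ 2 * τ * B * M * δ := by
  have hM0 : (0:ℝ) ≤ M := hM.le
  set g : ℝ → ℝ := fun u => K ((t - u) / h) with hgdef
  have hgc : Continuous g := hKcont.comp (by continuity)
  have hxc : Continuous x := by
    have hL : LipschitzWith (Real.toNNReal M) x := by
      apply LipschitzWith.of_dist_le_mul
      intro u w
      simpa [Real.dist_eq, Real.coe_toNNReal M hM0] using hx u w
    exact hL.continuous
  -- K vanishes on [τ,∞) and (−∞,−τ]
  have hK1 : ∀ v : ℝ, τ ≤ v → K v = 0 := by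
    have h0 : Set.EqOn K 0 (Set.Ioi τ) := by
      intro v hv
      have : K v = 0 := hKsupp v (by
        simp only [Set.mem_Icc, not_and, not_le]
        intro _; exact hv)
      simpa using this
    have h1 := h0.closure hKcont continuous_const
    rw [closure_Ioi] at h1
    intro v hv; simpa using h1 hv
  have hK2 : ∀ v : ℝ, v ≤ -τ → K v = 0 := by
    have h0 : Set.EqOn K 0 (Set.Iio (-τ)) := by
      intro v hv
      have : K v = 0 := hKsupp v (by
        simp only [Set.mem_Icc, not_and, not_le]
        intro hv'; exact absurd hv' (not_le.mpr hv))
      simpa using this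
    have h1 := h0.closure hKcont continuous_const
    rw [closure_Iio] at h1
    intro v hv; simpa using h1 hv
  set a := t - τ * h with hadef
  set b := t + τ * h with hbdef
  have hab : a ≤ b := by simp only [hadef, hbdef]; nlinarith
  have ha0 : 0 ≤ a := (ht (Set.left_mem_Icc.mpr hab)).1
  have hb1 : b ≤ 1 := (ht (Set.right_mem_Icc.mpr hab)).2
  -- generic partition summation lemma
  have hint : ∀ f : ℝ → ℝ, Continuous f →
      ∑ j ∈ Finset.range n, ∫ u in (s j)..(s (j+1)), f u = ∫ u in (0:ℝ)..1, f u := by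
    intro f hf
    rw [show (0:ℝ) = s 0 from hs0.symm, show (1:ℝ) = s n from hsn.symm]
    exact intervalIntegral.sum_integral_adjacent_intervals
      (fun k _ => hf.intervalIntegrable _ _)
  -- reindex the sum
  have hsum1 : ∑ i ∈ Finset.Icc 1 n, (∫ u in (s (i - 1))..(s i), g u) * x (ti i)
      = ∑ j ∈ Finset.range n, (∫ u in (s j)..(s (j+1)), g u) * x (ti (j+1)) := by
    rw [show Finset.Icc 1 n = Finset.Ico 1 (n+1) by rw [Finset.Ico_add_one_right_eq_Icc],
      Finset.sum_Ico_eq_sum_range]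
    refine Finset.sum_congr (by norm_num) fun j _ => ?_
    have e1 : 1 + j - 1 = j := by omega
    have e2 : 1 + j = j + 1 := by omega
    rw [e1, e2]
  -- the key identity
  have key : (∑ i ∈ Finset.Icc 1 n, (∫ u in (s (i - 1))..(s i), g u) * x (ti i))
        - (∫ u in (0:ℝ)..1, g u * x u)
      = ∑ j ∈ Finset.range n, ∫ u in (s j)..(s (j+1)), g u * (x (ti (j+1)) - x u) := by
    rw [hsum1, ← hint (fun u => g u * x u) (hgc.mul hxc), ← Finset.sum_sub_distrib]
    refine Finset.sum_congr rfl fun j _ => ?_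
    rw [← intervalIntegral.integral_mul_const,
      ← intervalIntegral.integral_sub (f := fun u => g u * x (ti (j+1))) (g := fun u => g u * x u)
        ((hgc.mul continuous_const).intervalIntegrable _ _)
        ((hgc.mul hxc).intervalIntegrable _ _)]
    refine intervalIntegral.integral_congr fun u _ => ?_
    ring
  -- bound each term
  have step : ∀ j ∈ Finset.range n,
      |∫ u in (s j)..(s (j+1)), g u * (x (ti (j+1)) - x u)|
        ≤ ∫ u in (s j)..(s (j+1)), M * δ * |g u| := by
    intro j hj
    have hj' : j < n := Finset.mem_range.mp hj
    have hsj : s j ≤ s (j+1) := hmono j hj'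
    have hd : s (j+1) - s j ≤ δ := by
      have := hmesh (j+1) (by omega) (by omega)
      simpa using this
    have hti' : ti (j+1) ∈ Set.Icc (s j) (s (j+1)) := by
      have := hti (j+1) (by omega) (by omega)
      simpa using this
    calc |∫ u in (s j)..(s (j+1)), g u * (x (ti (j+1)) - x u)|
        ≤ ∫ u in (s j)..(s (j+1)), |g u * (x (ti (j+1)) - x u)| :=
          intervalIntegral.abs_integral_le_integral_abs hsj
      _ ≤ ∫ u in (s j)..(s (j+1)), M * δ * |g u| := by
          apply intervalIntegral.integral_mono_on hsj
          · exact ((hgc.mul (continuous_const.sub hxc)).abs).intervalIntegrable _ _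
          · exact ((continuous_const.mul hgc.abs)).intervalIntegrable _ _
          · intro u hu
            rw [abs_mul]
            have h1 : |x (ti (j+1)) - x u| ≤ M * δ := by
              calc |x (ti (j+1)) - x u| ≤ M * |ti (j+1) - u| := hx _ _
                _ ≤ M * δ := by
                    apply mul_le_mul_of_nonneg_left _ hM0
                    rw [abs_le]
                    constructor <;> [linarith [hti'.1, hu.2]; linarith [hti'.2, hu.1]]
            calc |g u| * |x (ti (j+1)) - x u| ≤ |g u| * (M * δ) :=
                  mul_le_mul_of_nonneg_left h1 (abs_nonneg _)
              _ = M * δ * |g u| := by ring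
  -- integrability of |g|
  have hgint : ∀ c d : ℝ, IntervalIntegrable (fun u => |g u|) volume c d :=
    fun c d => hgc.abs.intervalIntegrable _ _
  -- the integral of |g| over [0,1]
  have hz1 : ∫ u in (0:ℝ)..a, |g u| = 0 := by
    rw [intervalIntegral.integral_congr (g := fun _ => (0:ℝ)) ?_]
    · simp
    · intro u hu
      rw [Set.uIcc_of_le ha0] at hu
      have : τ ≤ (t - u) / h := by
        rw [le_div_iff₀ hh]
        have := hu.2
        simp only [hadef] at this
        linarith
      simp [hgdef, hK1 _ this]
  have hz2 : ∫ u in b..(1:ℝ), |g u| = 0 := by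
    rw [intervalIntegral.integral_congr (g := fun _ => (0:ℝ)) ?_]
    · simp
    · intro u hu
      rw [Set.uIcc_of_le hb1] at hu
      have : (t - u) / h ≤ -τ := by
        rw [div_le_iff₀ hh]
        have := hu.1
        simp only [hbdef] at this
        linarith
      simp [hgdef, hK2 _ this]
  have hmid : ∫ u in a..b, |g u| ≤ B * (2 * τ * h) := by
    calc ∫ u in a..b, |g u| ≤ ∫ _u in a..b, B := by
          apply intervalIntegral.integral_mono_on hab (hgint a b)
            (intervalIntegrable_const)
          intro u _; exact hKbdd _
      _ = (b - a) * B := by simp [intervalIntegral.integral_const, smul_eq_mul]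
      _ = B * (2 * τ * h) := by simp only [hadef, hbdef]; ring
  have htot : ∫ u in (0:ℝ)..1, |g u| ≤ B * (2 * τ * h) := by
    have h1 : (∫ u in (0:ℝ)..a, |g u|) + (∫ u in a..b, |g u|) = ∫ u in (0:ℝ)..b, |g u| :=
      intervalIntegral.integral_add_adjacent_intervals (hgint _ _) (hgint _ _)
    have h2 : (∫ u in (0:ℝ)..b, |g u|) + (∫ u in b..(1:ℝ), |g u|) = ∫ u in (0:ℝ)..1, |g u| :=
      intervalIntegral.integral_add_adjacent_intervals (hgint _ _) (hgint _ _)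
    have : ∫ u in (0:ℝ)..1, |g u| = ∫ u in a..b, |g u| := by
      rw [← h2, ← h1, hz1, hz2]; ring
    rw [this]; exact hmid
  -- assemble
  have hS : |∑ j ∈ Finset.range n, ∫ u in (s j)..(s (j+1)), g u * (x (ti (j+1)) - x u)|
      ≤ M * δ * (B * (2 * τ * h)) := by
    calc |∑ j ∈ Finset.range n, ∫ u in (s j)..(s (j+1)), g u * (x (ti (j+1)) - x u)|
        ≤ ∑ j ∈ Finset.range n, |∫ u in (s j)..(s (j+1)), g u * (x (ti (j+1)) - x u)| :=
          Finset.abs_sum_le_sum_abs _ _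
      _ ≤ ∑ j ∈ Finset.range n, ∫ u in (s j)..(s (j+1)), M * δ * |g u| :=
          Finset.sum_le_sum step
      _ = ∫ u in (0:ℝ)..1, M * δ * |g u| :=
          hint _ (continuous_const.mul hgc.abs)
      _ = M * δ * ∫ u in (0:ℝ)..1, |g u| := intervalIntegral.integral_const_mul _ _
      _ ≤ M * δ * (B * (2 * τ * h)) := by
          apply mul_le_mul_of_nonneg_left htot
          positivity
  have hfinal : |(1 / h) * ∑ i ∈ Finset.Icc 1 n, (∫ u in (s (i - 1))..(s i), g u) * x (ti i)
        - (1 / h) * ∫ u in (0:ℝ)..1, g u * x u|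
      ≤ 2 * τ * B * M * δ := by
    rw [← mul_sub, abs_mul, abs_of_pos (by positivity : (0:ℝ) < 1/h), key]
    calc (1/h) * |∑ j ∈ Finset.range n, ∫ u in (s j)..(s (j+1)), g u * (x (ti (j+1)) - x u)|
        ≤ (1/h) * (M * δ * (B * (2 * τ * h))) := by
          apply mul_le_mul_of_nonneg_left hS; positivity
      _ = 2 * τ * B * M * δ := by field_simp
  exact hfinal
end
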